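/- Preservation of influences: Let f be a Boolean network of dimension n and ⟨f⟩ its interval-semantics encoding. For all i, j ∈ {1,…,n} with i ≠ j: (j,i) is a positive edge of G(f) if and only if (2j, 2i−1) is a positive edge of G(⟨f⟩), and (j,i) is a negative edge of G(f) if and only if (2j, 2i−1) is a negative edge of G(⟨f⟩). -/
import Mathlib


/-- Asynchronous transition relation of a Boolean network `f`:
`x → y` iff exactly one component `i` differs and `y i = f i x`. -/
def asyncStep {ι : Type} (f : ι → (ι → Bool) → Bool) (x y : ι → Bool) : Prop :=
  ∃ i : ι, x i ≠ y i ∧ (∀ j : ι, j ≠ i → x j = y j) ∧ y i = f i x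

/-- Index of the "write" node `2i-1` (0-indexed: `2i`). -/
def wIdx {n : ℕ} (i : Fin n) : Fin (2 * n) := ⟨2 * i.val, by have := i.isLt; omega⟩

/-- Index of the "read" node `2i` (0-indexed: `2i+1`). -/
def rIdx {n : ℕ} (i : Fin n) : Fin (2 * n) := ⟨2 * i.val + 1, by have := i.isLt; omega⟩

/-- `γ : 𝔹^{2n} → 𝔹^n`, projection on read nodes. -/
def gam {n : ℕ} (z : Fin (2 * n) → Bool) : Fin n → Bool := fun i => z (rIdx i)

/-- `α : 𝔹^n → 𝔹^{2n}`, consistent configuration. -/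
def alph {n : ℕ} (x : Fin n → Bool) : Fin (2 * n) → Bool :=
  fun k => x ⟨k.val / 2, by have := k.isLt; omega⟩

/-- Interval-semantics encoding `⟨f⟩` of a Boolean network `f`. -/
def encode {n : ℕ} (f : Fin n → (Fin n → Bool) → Bool) :
    Fin (2 * n) → (Fin (2 * n) → Bool) → Bool := fun k z =>
  let i : Fin n := ⟨k.val / 2, by have := k.isLt; omega⟩
  if k.val % 2 = 0 then
    (f i (gam z) && (!(z (rIdx i)) || z (wIdx i))) || (!(z (rIdx i)) && z (wIdx i))
  else
    z (wIdx i)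

/-- Positive edge `(j,i)` of the influence graph `G(f)`. -/
def posEdge {ι : Type} (f : ι → (ι → Bool) → Bool) (j i : ι) : Prop :=
  ∃ x y : ι → Bool, (∀ k : ι, k ≠ j → x k = y k) ∧ x j = false ∧ y j = true ∧
    f i x = false ∧ f i y = true

/-- Negative edge `(j,i)` of the influence graph `G(f)`. -/
def negEdge {ι : Type} (f : ι → (ι → Bool) → Bool) (j i : ι) : Prop :=
  ∃ x y : ι → Bool, (∀ k : ι, k ≠ j → x k = y k) ∧ x j = false ∧ y j = true ∧
    f i x = true ∧ f i y = false

lemma alph_rIdx {n : ℕ} (x : Fin n → Bool) (k : Fin n) : alph x (rIdx k) = x k := by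
  unfold alph rIdx
  congr 1
  exact Fin.ext (by show (2 * k.val + 1) / 2 = k.val; omega)

lemma alph_wIdx {n : ℕ} (x : Fin n → Bool) (k : Fin n) : alph x (wIdx k) = x k := by
  unfold alph wIdx
  congr 1
  exact Fin.ext (by show (2 * k.val) / 2 = k.val; omega)

lemma encode_wIdx {n : ℕ} (f : Fin n → (Fin n → Bool) → Bool) (i : Fin n)
    (z : Fin (2 * n) → Bool) :
    encode f (wIdx i) z =
      ((f i (gam z) && (!(z (rIdx i)) || z (wIdx i))) || (!(z (rIdx i)) && z (wIdx i))) := by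
  have h2 : (⟨(wIdx i).val / 2, by have := (wIdx i).isLt; omega⟩ : Fin n) = i :=
    Fin.ext (by show (2 * i.val) / 2 = i.val; omega)
  unfold encode
  rw [if_pos (by show (2 * i.val) % 2 = 0; omega), h2]

lemma rIdx_ne_wIdx {n : ℕ} (j i : Fin n) : rIdx j ≠ wIdx i := by
  simp only [rIdx, wIdx, Ne, Fin.mk.injEq]; omega

lemma rIdx_inj {n : ℕ} {k j : Fin n} : rIdx k = rIdx j ↔ k = j := by
  simp only [rIdx, Fin.mk.injEq, Fin.ext_iff]; omega

lemma gen_edge {n : ℕ} (f : Fin n → (Fin n → Bool) → Bool)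
    (i j : Fin n) (hij : i ≠ j) (p q : Bool) (hpq : p ≠ q) :
    (∃ x y : Fin n → Bool, (∀ k, k ≠ j → x k = y k) ∧ x j = false ∧ y j = true ∧
      f i x = p ∧ f i y = q) ↔
    (∃ x y : Fin (2*n) → Bool, (∀ k, k ≠ rIdx j → x k = y k) ∧ x (rIdx j) = false ∧
      y (rIdx j) = true ∧ encode f (wIdx i) x = p ∧ encode f (wIdx i) y = q) := by
  constructor
  · rintro ⟨x, y, hxy, hxj, hyj, hfx, hfy⟩
    refine ⟨alph x, Function.update (alph x) (rIdx j) true, ?_, ?_, ?_, ?_, ?_⟩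
    · intro k hk; rw [Function.update_of_ne hk]
    · rw [alph_rIdx]; exact hxj
    · simp [Function.update_self]
    · rw [encode_wIdx]
      have hg : gam (alph x) = x := funext fun k => alph_rIdx x k
      rw [hg, alph_rIdx, alph_wIdx, hfx]
      cases x i <;> simp
    · rw [encode_wIdx]
      have hg : gam (Function.update (alph x) (rIdx j) true) = y := by
        funext k
        by_cases hk : k = j
        · subst hk; simp [gam, Function.update_self, hyj]
        · simp only [gam, Function.update_of_ne (rIdx_inj.not.mpr hk), alph_rIdx]
          exact hxy k hk
      rw [hg, Function.update_of_ne (rIdx_inj.not.mpr hij),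
        Function.update_of_ne (rIdx_ne_wIdx j i).symm, alph_rIdx, alph_wIdx, hfy]
      cases x i <;> cases q <;> simp_all
  · rintro ⟨z, z', hzz, hzj, hzj', hez, hez'⟩
    refine ⟨gam z, gam z', ?_, hzj, hzj', ?_, ?_⟩
    · intro k hk
      exact hzz (rIdx k) (fun h => hk (rIdx_inj.mp h))
    all_goals {
      rw [encode_wIdx] at hez hez'
      have h1 : z' (rIdx i) = z (rIdx i) := (hzz (rIdx i) (rIdx_inj.not.mpr hij)).symm
      have h2 : z' (wIdx i) = z (wIdx i) := (hzz (wIdx i) (rIdx_ne_wIdx j i).symm).symm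
      rw [h1, h2] at hez'
      revert hez hez'
      cases z (rIdx i) <;> cases z (wIdx i) <;> cases p <;> cases q <;> simp_all
    }

/-- for `i ≠ j`, `(j,i)` is a positive (resp. negative) edge of `G(f)`
iff `(2j, 2i−1)` is a positive (resp. negative) edge of `G(⟨f⟩)`. -/
theorem influence_preserved {n : ℕ} (f : Fin n → (Fin n → Bool) → Bool)
    (i j : Fin n) (hij : i ≠ j) :
    (posEdge f j i ↔ posEdge (encode f) (rIdx j) (wIdx i)) ∧
    (negEdge f j i ↔ negEdge (encode f) (rIdx j) (wIdx i)) := by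
  exact ⟨gen_edge f i j hij false true (by simp), gen_edge f i j hij true false (by simp)⟩
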